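/- Let α : [0,T] → ℝ be continuous and satisfy α(T) = 0 and, for all t ∈ [0,T], α(t) = (1/(T+1-t))∫ₜᵀ α(s) ds + (K/2)[(T+1-t) − 1/(T+1-t)] for a constant K. Then α is differentiable and α(t) = K(T-t) for all t ∈ [0,T]; equivalently, the unique solution is α(t) = K(T-t). -/

import Mathlib

open Set intervalIntegral

theorem stmt_9 (T K : ℝ) (hT : 0 < T) (α : ℝ → ℝ)
    (hcont : ContinuousOn α (Icc 0 T)) (hαT : α T = 0)
    (heq : ∀ t ∈ Icc (0:ℝ) T,
      α t = (1/(T+1-t)) * (∫ s in t..T, α s)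
        + (K/2) * ((T+1-t) - 1/(T+1-t))) :
    DifferentiableOn ℝ α (Icc 0 T) ∧ ∀ t ∈ Icc (0:ℝ) T, α t = K * (T - t) := by
  -- clamping map
  set c : ℝ → ℝ := fun t => max 0 (min t T) with hc
  have hcmem : ∀ t, c t ∈ Icc (0:ℝ) T := fun t =>
    ⟨le_max_left _ _, max_le (le_of_lt hT) (min_le_right _ _)⟩
  have hccont : Continuous c := by fun_prop
  have hcid : ∀ t ∈ Icc (0:ℝ) T, c t = t := by
    intro t ht
    simp [hc, min_eq_left ht.2, max_eq_right ht.1]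
  -- extended difference function
  set γ : ℝ → ℝ := fun t => α (c t) - K * (T - c t) with hγdef
  have hγcont : Continuous γ :=
    (hcont.comp_continuous hccont hcmem).sub (by fun_prop)
  have hγeq : ∀ t ∈ Icc (0:ℝ) T, γ t = α t - K * (T - t) := by
    intro t ht; simp [hγdef, hcid t ht]
  set B : ℝ → ℝ := fun t => ∫ s in t..T, γ s with hBdef
  have hu : ∀ x ∈ Icc (0:ℝ) T, (1:ℝ) ≤ T + 1 - x := by
    intro x hx; linarith [hx.2]
  have hune : ∀ x ∈ Icc (0:ℝ) T, T + 1 - x ≠ 0 := by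
    intro x hx; have := hu x hx; linarith
  -- key relation : B x = γ x * (T+1-x)
  have key : ∀ x ∈ Icc (0:ℝ) T, B x = γ x * (T + 1 - x) := by
    intro x hx
    have hxT : x ≤ T := hx.2
    have hsub : Icc x T ⊆ Icc 0 T := Icc_subset_Icc hx.1 le_rfl
    have hαint : IntervalIntegrable α MeasureTheory.volume x T :=
      (hcont.mono hsub).intervalIntegrable_of_Icc hxT
    have hgint : IntervalIntegrable (fun s => K * (T - s)) MeasureTheory.volume x T :=
      (Continuous.intervalIntegrable (by fun_prop)) _ _
    have hBx : B x = (∫ s in x..T, α s) - ∫ s in x..T, K * (T - s) := by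
      rw [hBdef]
      rw [← intervalIntegral.integral_sub hαint hgint]
      apply intervalIntegral.integral_congr
      intro s hs
      rw [uIcc_of_le hxT] at hs
      exact hγeq s (hsub hs)
    have hpoly : (∫ s in x..T, K * (T - s)) = K * (T - x)^2 / 2 := by
      have h1 : (∫ s in x..T, K * (T - s))
          = K * ∫ s in x..T, (T - s) := intervalIntegral.integral_const_mul _ _
      have h2 : (∫ s in x..T, (T - s)) = (∫ s in x..T, (T:ℝ)) - ∫ s in x..T, s := by
        apply intervalIntegral.integral_sub
        · exact intervalIntegrable_const
        · exact (Continuous.intervalIntegrable (by fun_prop)) _ _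
      rw [h1, h2, intervalIntegral.integral_const, integral_id]
      simp only [smul_eq_mul]
      ring
    have he := heq x hx
    have hne := hune x hx
    have hγx := hγeq x hx
    rw [hBx, hpoly, hγx]
    field_simp at he ⊢
    nlinarith [he]
  -- quotient function is constant
  set f : ℝ → ℝ := fun t => B t * (T + 1 - t)⁻¹ with hfdef
  have hfderiv : ∀ x ∈ Icc (0:ℝ) T, HasDerivAt f 0 x := by
    intro x hx
    have hne := hune x hx
    have hBder : HasDerivAt B (-γ x) x := by
      apply intervalIntegral.integral_hasDerivAt_left
      · exact (Continuous.intervalIntegrable hγcont) _ _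
      · exact hγcont.stronglyMeasurableAtFilter _ _
      · exact hγcont.continuousAt
    have hder2 : HasDerivAt (fun t => (T + 1 - t)⁻¹) (((T+1-x)^2)⁻¹) x := by
      have h0 : HasDerivAt (fun t : ℝ => T + 1 - t) (-1) x := by
        simpa using ((hasDerivAt_id x).const_sub (T+1))
      have := h0.inv hne
      refine this.congr_deriv ?_
      ring
    have := hBder.mul hder2
    refine this.congr_deriv ?_
    rw [key x hx]
    field_simp
    ring
  have hfconst : ∀ x ∈ Icc (0:ℝ) T, f x = f 0 := by
    apply constant_of_has_deriv_right_zero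
    · intro x hx
      exact ((hfderiv x hx).differentiableAt.continuousAt).continuousWithinAt
    · intro x hx
      exact (hfderiv x (Ico_subset_Icc_self hx)).hasDerivWithinAt
  have hfT : f T = 0 := by
    simp [hfdef, hBdef]
  have hfzero : ∀ x ∈ Icc (0:ℝ) T, f x = 0 := by
    intro x hx
    rw [hfconst x hx, ← hfconst T (right_mem_Icc.2 hT.le), hfT]
  -- conclude γ = 0 on Icc
  have hγzero : ∀ x ∈ Icc (0:ℝ) T, α x = K * (T - x) := by
    intro x hx
    have h := hfzero x hx
    have hne := hune x hx
    rw [hfdef] at h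
    simp only at h
    rw [key x hx, hγeq x hx] at h
    have : α x - K * (T - x) = 0 := by
      rwa [mul_inv_cancel_right₀ hne] at h
    linarith
  refine ⟨?_, hγzero⟩
  have hdiff : DifferentiableOn ℝ (fun x => K * (T - x)) (Icc 0 T) := by
    apply Differentiable.differentiableOn; fun_prop
  exact hdiff.congr hγzero
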